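/- If 𝓔 is a Bures contractive Schwarz channel on (A, τ), then its fixed point space is trivial: Fix 𝓔 = ℂ·1. -/

import Mathlib

open scoped ComplexOrder

/-- Fidelity F_τ(σ,ρ) = τ((ρ^{1/2} σ ρ^{1/2})^{1/2}) in a C*-algebra with trace τ. -/
noncomputable def cFid {A : Type*} [CStarAlgebra A] [PartialOrder A] [StarOrderedRing A]
    (τ : A →ₗ[ℂ] ℂ) (σ ρ : A) : ℝ :=
  (τ (CFC.sqrt (CFC.sqrt ρ * σ * CFC.sqrt ρ))).re

/-- The Bures distance d_B(σ,ρ) = √(1 - F_τ(σ,ρ)). -/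
noncomputable def cdB {A : Type*} [CStarAlgebra A] [PartialOrder A] [StarOrderedRing A]
    (τ : A →ₗ[ℂ] ℂ) (σ ρ : A) : ℝ :=
  Real.sqrt (1 - cFid τ σ ρ)

/-- Bures contractive: strictly decreases the Bures distance between distinct density
elements. -/
def IsBuresContractive {A : Type*} [CStarAlgebra A] [PartialOrder A] [StarOrderedRing A]
    (τ : A →ₗ[ℂ] ℂ) (E : A →ₗ[ℂ] A) : Prop :=
  ∀ σ ρ : A, 0 ≤ σ → 0 ≤ ρ → τ σ = 1 → τ ρ = 1 → σ ≠ ρ →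
    cdB τ (E σ) (E ρ) < cdB τ σ ρ

open scoped ComplexStarModule

section Aux
lemma my_smul_nonneg {A : Type*} [CStarAlgebra A] [PartialOrder A] [StarOrderedRing A]
    {r : ℝ} (hr : 0 ≤ r) {a : A} (ha : 0 ≤ a) : 0 ≤ (r : ℂ) • a := by
  have h1 : CFC.sqrt a * CFC.sqrt a = a := CFC.sqrt_mul_sqrt_self a ha
  have hsa : IsSelfAdjoint (CFC.sqrt a) := IsSelfAdjoint.of_nonneg (CFC.sqrt_nonneg a)
  have key : star ((Real.sqrt r : ℂ) • CFC.sqrt a) * ((Real.sqrt r : ℂ) • CFC.sqrt a)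
      = (r : ℂ) • a := by
    rw [star_smul, smul_mul_smul_comm, hsa.star_eq, h1]
    congr 1
    simp [Complex.star_def, Complex.conj_ofReal, ← Complex.ofReal_mul, Real.mul_self_sqrt hr]
  rw [← key]
  exact star_mul_self_nonneg _

section Main
variable {A : Type*} [CStarAlgebra A] [PartialOrder A] [StarOrderedRing A]

lemma my_trace_real (τ : A →ₗ[ℂ] ℂ) (hpos : ∀ a : A, 0 ≤ a → 0 ≤ τ a)
    {a : A} (ha : 0 ≤ a) : ∃ r : ℝ, 0 ≤ r ∧ τ a = (r : ℂ) := by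
  have h := hpos a ha
  rw [Complex.le_def] at h
  exact ⟨(τ a).re, by simpa using h.1, by
    apply Complex.ext <;> simp [← h.2]⟩

lemma my_E_pos (E : A →ₗ[ℂ] A)
    (hSchwarz : ∀ x : A, star (E x) * E x ≤ E (star x * x))
    {a : A} (ha : 0 ≤ a) : 0 ≤ E a := by
  have h1 := hSchwarz (CFC.sqrt a)
  rw [(IsSelfAdjoint.of_nonneg (CFC.sqrt_nonneg (a := a))).star_eq,
    CFC.sqrt_mul_sqrt_self a ha] at h1
  exact le_trans (star_mul_self_nonneg _) h1

lemma my_E_sa (E : A →ₗ[ℂ] A)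
    (hSchwarz : ∀ x : A, star (E x) * E x ≤ E (star x * x))
    {a : A} (ha : IsSelfAdjoint a) : IsSelfAdjoint (E a) := by
  have hd : a⁺ - a⁻ = a := CFC.posPart_sub_negPart a ha
  have : E a = E a⁺ - E a⁻ := by rw [← map_sub, hd]
  rw [this]
  exact (IsSelfAdjoint.of_nonneg (my_E_pos E hSchwarz (CFC.posPart_nonneg a))).sub
    (IsSelfAdjoint.of_nonneg (my_E_pos E hSchwarz (CFC.negPart_nonneg a)))

lemma my_E_star (E : A →ₗ[ℂ] A)
    (hSchwarz : ∀ x : A, star (E x) * E x ≤ E (star x * x))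
    (a : A) : E (star a) = star (E a) := by
  have hdec : (ℜ a : A) + Complex.I • (ℑ a : A) = a := realPart_add_I_smul_imaginaryPart a
  have hstar : star a = (ℜ a : A) - Complex.I • (ℑ a : A) := by
    rw [← hdec]
    simp [star_smul, Complex.star_def, Complex.conj_I, (ℜ a).2.star_eq, (ℑ a).2.star_eq,
      sub_eq_add_neg]
  have h1 : IsSelfAdjoint (E (ℜ a : A)) := my_E_sa E hSchwarz (ℜ a).2
  have h2 : IsSelfAdjoint (E (ℑ a : A)) := my_E_sa E hSchwarz (ℑ a).2
  rw [hstar, ← hdec]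
  simp [map_sub, map_add, map_smul, star_add, star_smul, Complex.star_def, Complex.conj_I,
    h1.star_eq, h2.star_eq, sub_eq_add_neg]


lemma my_E_one (τ : A →ₗ[ℂ] ℂ)
    (hpos : ∀ a : A, 0 ≤ a → 0 ≤ τ a)
    (hfaith : ∀ a : A, 0 ≤ a → τ a = 0 → a = 0)
    (E : A →ₗ[ℂ] A)
    (hEtrace : ∀ x : A, τ (E x) = τ x)
    (hSchwarz : ∀ x : A, star (E x) * E x ≤ E (star x * x)) :
    E 1 = 1 := by
  have h1 := hSchwarz 1
  rw [star_one, one_mul] at h1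
  have hpos1 : 0 ≤ E 1 := le_trans (star_mul_self_nonneg _) h1
  have hsa : IsSelfAdjoint (E 1) := .of_nonneg hpos1
  have hsq : E 1 * E 1 ≤ E 1 := by rwa [hsa.star_eq] at h1
  have hnorm : ‖E 1‖ ≤ 1 := by
    have hmul : 0 ≤ E 1 * E 1 := by nth_rewrite 1 [← hsa.star_eq]; exact star_mul_self_nonneg _
    have h2 : ‖E 1 * E 1‖ ≤ ‖E 1‖ := CStarAlgebra.norm_le_norm_of_nonneg_of_le hmul hsq
    nth_rewrite 1 [← hsa.star_eq] at h2
    rw [CStarRing.norm_star_mul_self] at h2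
    nlinarith [norm_nonneg (E 1)]
  have hle : E 1 ≤ 1 := by
    refine le_trans hsa.le_algebraMap_norm_self ?_
    calc algebraMap ℝ A ‖E 1‖ = ((‖E 1‖ : ℂ)) • (1 : A) := by
          rw [Algebra.algebraMap_eq_smul_one]
          norm_num [← Complex.coe_smul]
      _ ≤ 1 := by
          have hone : (0:A) ≤ 1 := by simpa using star_mul_self_nonneg (1:A)
          have : 0 ≤ ((1 - ‖E 1‖ : ℝ) : ℂ) • (1 : A) :=
            my_smul_nonneg (by linarith) hone
          have h3 : ((1 - ‖E 1‖ : ℝ) : ℂ) • (1 : A) = 1 - (‖E 1‖ : ℂ) • (1 : A) := by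
            push_cast
            rw [sub_smul, one_smul]
          rw [h3] at this
          exact sub_nonneg.mp this
  have hz : (0:A) ≤ 1 - E 1 := by rwa [sub_nonneg]
  have ht : τ (1 - E 1) = 0 := by rw [map_sub, hEtrace]; ring
  have := hfaith _ hz ht
  rw [sub_eq_zero] at this
  exact this.symm

lemma my_key (τ : A →ₗ[ℂ] ℂ)
    (hpos : ∀ a : A, 0 ≤ a → 0 ≤ τ a)
    (hfaith : ∀ a : A, 0 ≤ a → τ a = 0 → a = 0)
    (E : A →ₗ[ℂ] A)
    (hEtrace : ∀ x : A, τ (E x) = τ x)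
    (hSchwarz : ∀ x : A, star (E x) * E x ≤ E (star x * x))
    (hBC : IsBuresContractive τ E)
    (a : A) (hsa : IsSelfAdjoint a) (hfix : E a = a)
    (hns : ∀ c : ℂ, a ≠ c • 1) : False := by
  have hE1 : E 1 = 1 := my_E_one τ hpos hfaith E hEtrace hSchwarz
  have hone : (0:A) ≤ 1 := by simpa using star_mul_self_nonneg (1:A)
  -- u = ‖a‖ • 1 + a is a nonnegative fixed element
  set u : A := (‖a‖ : ℂ) • 1 + a with hu_def
  have halg : algebraMap ℝ A ‖a‖ = (‖a‖ : ℂ) • (1 : A) := by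
    rw [Algebra.algebraMap_eq_smul_one]
    norm_num [← Complex.coe_smul]
  have hu0 : (0:A) ≤ u := by
    have := hsa.neg_algebraMap_norm_le_self
    rw [halg] at this
    have h2 := sub_nonneg.mpr this
    rwa [sub_neg_eq_add, add_comm] at h2
  have hEu : E u = u := by rw [hu_def, map_add, map_smul, hE1, hfix]
  obtain ⟨r, hr0, hτu⟩ := my_trace_real τ hpos hu0
  rcases eq_or_lt_of_le hr0 with hr | hr
  · have : u = 0 := hfaith u hu0 (by rw [hτu, ← hr]; simp)
    exact hns (-‖a‖ : ℝ) (by push_cast; rw [neg_smul, eq_neg_iff_add_eq_zero, add_comm]; exact this)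
  obtain ⟨t, ht0, hτ1⟩ := my_trace_real τ hpos hone
  rcases eq_or_lt_of_le ht0 with ht | ht
  · have h1 : (1:A) = 0 := hfaith 1 hone (by rw [hτ1, ← ht]; simp)
    exact hns 0 (by rw [zero_smul, ← mul_one a, h1, mul_zero])
  -- two distinct fixed density elements
  set σ : A := ((r : ℂ))⁻¹ • u with hσ_def
  set ρ : A := ((t : ℂ))⁻¹ • 1 with hρ_def
  have hrne : (r : ℂ) ≠ 0 := by exact_mod_cast hr.ne'
  have htne : (t : ℂ) ≠ 0 := by exact_mod_cast ht.ne'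
  have hσ0 : (0:A) ≤ σ := by
    rw [hσ_def, ← Complex.ofReal_inv]
    exact my_smul_nonneg (by positivity) hu0
  have hρ0 : (0:A) ≤ ρ := by
    rw [hρ_def, ← Complex.ofReal_inv]
    exact my_smul_nonneg (by positivity) hone
  have hτσ : τ σ = 1 := by rw [hσ_def, map_smul, hτu, smul_eq_mul, inv_mul_cancel₀ hrne]
  have hτρ : τ ρ = 1 := by rw [hρ_def, map_smul, hτ1, smul_eq_mul, inv_mul_cancel₀ htne]
  have hEσ : E σ = σ := by rw [hσ_def, map_smul, hEu]
  have hEρ : E ρ = ρ := by rw [hρ_def, map_smul, hE1]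
  have hne : σ ≠ ρ := by
    intro h
    apply hns (((r : ℂ)) * ((t : ℂ))⁻¹ - (‖a‖ : ℂ))
    have hu_eq : u = ((r : ℂ) * ((t : ℂ))⁻¹) • (1:A) := by
      have := congrArg (fun z => (r : ℂ) • z) h
      simpa [hσ_def, hρ_def, smul_smul, mul_inv_cancel₀ hrne, mul_comm] using this
    rw [sub_smul, ← hu_eq, hu_def]
    abel
  have hlt := hBC σ ρ hσ0 hρ0 hτσ hτρ hne
  rw [hEσ, hEρ] at hlt
  exact lt_irrefl _ hlt

end Main

/-- a Bures contractive Schwarz channel has trivial fixed point space ℂ·1. -/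
theorem bures_contractive_trivial_fixed_points {A : Type*}
    [CStarAlgebra A] [PartialOrder A] [StarOrderedRing A]
    (τ : A →ₗ[ℂ] ℂ)
    (hpos : ∀ a : A, 0 ≤ a → 0 ≤ τ a)
    (hfaith : ∀ a : A, 0 ≤ a → τ a = 0 → a = 0)
    (htracial : ∀ x y : A, τ (x * y) = τ (y * x))
    (E : A →ₗ[ℂ] A)
    (hEtrace : ∀ x : A, τ (E x) = τ x)
    (hSchwarz : ∀ x : A, star (E x) * E x ≤ E (star x * x))
    (hBC : IsBuresContractive τ E) :
    ∀ x : A, E x = x → ∃ c : ℂ, x = c • (1 : A) := by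
  intro x hx
  by_contra hcon
  push_neg at hcon
  have hxstar : E (star x) = star x := by rw [my_E_star E hSchwarz, hx]
  have hh_sa : IsSelfAdjoint (x + star x) := by
    rw [IsSelfAdjoint, star_add, star_star, add_comm]
  have hk_sa : IsSelfAdjoint (Complex.I • (star x - x)) := by
    rw [IsSelfAdjoint, star_smul, star_sub, star_star, Complex.star_def, Complex.conj_I,
      neg_smul, ← smul_neg, neg_sub]
  have hEh : E (x + star x) = x + star x := by rw [map_add, hx, hxstar]
  have hEk : E (Complex.I • (star x - x)) = Complex.I • (star x - x) := by
    rw [map_smul, map_sub, hx, hxstar]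
  by_cases Hh : ∃ c : ℂ, x + star x = c • 1
  · by_cases Hk : ∃ c : ℂ, Complex.I • (star x - x) = c • 1
    · obtain ⟨c, hc1⟩ := Hh
      obtain ⟨d, hd1⟩ := Hk
      apply hcon ((c + Complex.I * d) / 2)
      have h2x : (2:ℂ) • x = (x + star x) + Complex.I • (Complex.I • (star x - x)) := by
        rw [smul_smul, Complex.I_mul_I, neg_one_smul, two_smul]
        abel
      have hx2 : x = (2⁻¹ : ℂ) • ((x + star x) + Complex.I • (Complex.I • (star x - x))) := by
        rw [← h2x, smul_smul]
        norm_num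
      rw [hx2, hc1, hd1, smul_smul, smul_add, smul_smul, smul_smul, ← add_smul]
      congr 1
      ring
    · push_neg at Hk
      exact my_key τ hpos hfaith E hEtrace hSchwarz hBC _ hk_sa hEk Hk
  · push_neg at Hh
    exact my_key τ hpos hfaith E hEtrace hSchwarz hBC _ hh_sa hEh Hh
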